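/- Let c > 0, h > 0, and let μ : ℝ → ℝ satisfy μ(x) − μ(x') ≤ −c(x − x') whenever x ≥ x'. For x, x' ∈ ℝ with x − x' ∈ 2hℤ, define the one-step expected distance change D(x,x') := (|x−x'+2h| − |x−x'|)·(μ(x) − μ(x)∧μ(x'))/(2h) + (|x−x'−2h| − |x−x'|)·(μ(x') − μ(x)∧μ(x'))/(2h). Then D(x,x') = sgn(x−x')·(μ(x) − μ(x')) ≤ −c|x−x'| (interpreting sgn appropriately when x = x'). -/
import Mathlib


/-- Coupling contraction for the finite-difference Markov chain (step 2.a.(i) of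
the proof of Proposition 4.2): if `μ(x) - μ(x') ≤ -c(x - x')` whenever `x ≥ x'`,
then for grid points with `x - x' ∈ 2hℤ`, the one-step expected distance change
`D(x,x')` equals `sgn(x-x')(μ(x) - μ(x'))` and is at most `-c|x - x'|`. -/
theorem stmt_10 (c h : ℝ) (hc : 0 < c) (hh : 0 < h) (μ : ℝ → ℝ)
    (hμ : ∀ x x' : ℝ, x' ≤ x → μ x - μ x' ≤ -c * (x - x'))
    (x x' : ℝ) (hgrid : ∃ k : ℤ, x - x' = 2 * h * k) :
    (|x - x' + 2 * h| - |x - x'|) * ((μ x - min (μ x) (μ x')) / (2 * h)) +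
      (|x - x' - 2 * h| - |x - x'|) * ((μ x' - min (μ x) (μ x')) / (2 * h))
      = Real.sign (x - x') * (μ x - μ x') ∧
    (|x - x' + 2 * h| - |x - x'|) * ((μ x - min (μ x) (μ x')) / (2 * h)) +
      (|x - x' - 2 * h| - |x - x'|) * ((μ x' - min (μ x) (μ x')) / (2 * h))
      ≤ -c * |x - x'| := by
  obtain ⟨k, hk⟩ := hgrid
  have h2h : (0:ℝ) < 2 * h := by linarith
  rcases lt_trichotomy x x' with hlt | heq | hgt
  · -- x < x' : x' - x ≥ 2h
    have hk0 : (k:ℝ) < 0 := by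
      by_contra hK
      push_neg at hK
      nlinarith
    have hkle : (k:ℝ) ≤ -1 := by
      have hki : k < 0 := by exact_mod_cast hk0
      have : k ≤ -1 := by omega
      exact_mod_cast this
    have hge : x' - x ≥ 2 * h := by nlinarith
    have hmono : μ x' ≤ μ x := by nlinarith [hμ x' x (le_of_lt hlt)]
    have hmin : min (μ x) (μ x') = μ x' := min_eq_right hmono
    have ha1 : |x - x' + 2 * h| = -(x - x' + 2*h) ∨ |x - x' + 2 * h| = x - x' + 2*h := by
      rcases abs_cases (x - x' + 2*h) with ⟨h1,_⟩ | ⟨h1,_⟩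
      · right; exact h1
      · left; exact h1
    have habs1 : |x - x' + 2 * h| = -(x - x') - 2*h := by
      rw [abs_of_nonpos (by linarith)]; ring
    have habs2 : |x - x' - 2 * h| = -(x - x') + 2*h := by
      rw [abs_of_nonpos (by linarith)]; ring
    have habs : |x - x'| = -(x - x') := abs_of_nonpos (by linarith)
    have hsign : Real.sign (x - x') = -1 := Real.sign_of_neg (by linarith)
    rw [habs1, habs2, habs, hmin, hsign]
    constructor
    · field_simp
      ring
    · have hD : (-(x - x') - 2*h - -(x - x')) * ((μ x - μ x') / (2 * h)) +
          (-(x - x') + 2*h - -(x - x')) * ((μ x' - μ x') / (2 * h)) = μ x' - μ x := by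
        field_simp; ring
      rw [hD]
      have := hμ x' x (le_of_lt hlt)
      nlinarith
  · subst heq
    simp [Real.sign, min_self]
  · -- x > x' : x - x' ≥ 2h
    have hk0 : (0:ℝ) < k := by
      by_contra hK
      push_neg at hK
      nlinarith
    have hkle : (1:ℝ) ≤ k := by
      have : 1 ≤ k := by exact_mod_cast hk0
      exact_mod_cast this
    have hge : x - x' ≥ 2 * h := by nlinarith
    have hmono : μ x ≤ μ x' := by nlinarith [hμ x x' (le_of_lt hgt)]
    have hmin : min (μ x) (μ x') = μ x := min_eq_left hmono
    have habs1 : |x - x' + 2 * h| = x - x' + 2*h := abs_of_nonneg (by linarith)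
    have habs2 : |x - x' - 2 * h| = x - x' - 2*h := abs_of_nonneg (by linarith)
    have habs : |x - x'| = x - x' := abs_of_nonneg (by linarith)
    have hsign : Real.sign (x - x') = 1 := Real.sign_of_pos (by linarith)
    rw [habs1, habs2, habs, hmin, hsign]
    constructor
    · field_simp
      ring
    · have hD : (x - x' + 2*h - (x - x')) * ((μ x - μ x) / (2 * h)) +
          (x - x' - 2*h - (x - x')) * ((μ x' - μ x) / (2 * h)) = μ x - μ x' := by
        field_simp; ring
      rw [hD]
      exact hμ x x' (le_of_lt hgt)
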